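/- Let P be a polynomial of degree n with all zeros in the closed unit disk, and let p be a polynomial of degree at most n with |p(z)| ≤ |P(z)| for all |z| = 1. Then |p'(z)| ≤ |P'(z)| for all z with |z| ≥ 1. -/

import Mathlib

open Polynomial Metric Set

noncomputable def maxSphere (P : Polynomial ℂ) : ℝ :=
  sSup ((fun w => ‖P.eval w‖) '' sphere (0:ℂ) 1)

noncomputable def minSphere (P : Polynomial ℂ) : ℝ :=
  sInf ((fun w => ‖P.eval w‖) '' sphere (0:ℂ) 1)

lemma my_eval_reflect (f : Polynomial ℂ) (n : ℕ) (hf : f.natDegree ≤ n) {x : ℂ} (hx : x ≠ 0) :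
    (reflect n f).eval x⁻¹ * x ^ n = f.eval x := by
  letI := invertibleOfNonzero hx
  have h := eval₂_reflect_mul_pow (RingHom.id ℂ) x n f hf
  rw [eval₂_eq_eval_map, eval₂_eq_eval_map] at h
  simp only [Polynomial.map_id, invOf_eq_inv] at h
  exact h

lemma my_sphere_limit {f g : ℂ → ℝ} (hf : Continuous f) (hg : Continuous g)
    {z0 : ℂ} (hz0 : ‖z0‖ = 1)
    (h : ∀ z : ℂ, ‖z‖ = 1 → z ≠ z0 → f z ≤ g z) : f z0 ≤ g z0 := by
  set seq : ℕ → ℂ := fun k => z0 * Complex.exp (((((k:ℝ)+1)⁻¹ : ℝ) : ℂ) * Complex.I) with hseqdef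
  have hz0ne : z0 ≠ 0 := by
    intro h0; rw [h0] at hz0; simp at hz0
  have hT : Filter.Tendsto (fun k : ℕ => (((k:ℝ)+1)⁻¹)) Filter.atTop (nhds 0) := by
    simpa [one_div] using tendsto_one_div_add_atTop_nhds_zero_nat (𝕜 := ℝ)
  have hcont : Continuous fun t : ℝ => z0 * Complex.exp ((t : ℂ) * Complex.I) := by
    continuity
  have hseq : Filter.Tendsto seq Filter.atTop (nhds z0) := by
    have := (hcont.tendsto 0).comp hT
    simpa [Function.comp_def, hseqdef] using this
  have hmem : ∀ k : ℕ, ‖seq k‖ = 1 := by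
    intro k
    rw [hseqdef]
    simp only [norm_mul, hz0, Complex.norm_exp_ofReal_mul_I, one_mul]
  have hne : ∀ k : ℕ, seq k ≠ z0 := by
    intro k hk
    rw [hseqdef] at hk
    simp only at hk
    have hexp : Complex.exp (((((k:ℝ)+1)⁻¹ : ℝ) : ℂ) * Complex.I) = 1 := by
      have := hk
      nth_rewrite 2 [show z0 = z0 * 1 by ring] at this
      exact mul_left_cancel₀ hz0ne this
    rw [Complex.exp_eq_one_iff] at hexp
    obtain ⟨m, hm⟩ := hexp
    have hreal : (((k:ℝ)+1)⁻¹) = (m : ℝ) * (2 * Real.pi) := by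
      have him := congrArg Complex.im hm
      simp only [Complex.mul_im, Complex.ofReal_re, Complex.I_im, Complex.ofReal_im, Complex.I_re,
        Complex.intCast_re, Complex.intCast_im, mul_zero, zero_mul, add_zero, zero_add,
        mul_one] at him
      rw [show ((2:ℂ) * (Real.pi:ℂ)) = (((2*Real.pi : ℝ)):ℂ) by push_cast; ring,
        Complex.ofReal_re] at him
      linarith
    have hpos : (0:ℝ) < (((k:ℝ)+1)⁻¹) := by positivity
    have hle1 : ((((k:ℝ)+1))⁻¹) ≤ 1 := by
      rw [inv_le_one_iff₀]; right; linarith [Nat.cast_nonneg (α := ℝ) k]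
    have hpi : (3:ℝ) ≤ Real.pi := by
      have := Real.pi_gt_three; linarith
    rcases le_or_gt (m : ℝ) 0 with hm0 | hm0
    · nlinarith [Real.pi_pos]
    · have h1m : (1:ℝ) ≤ (m:ℝ) := by
        have : (0:ℤ) < m := by exact_mod_cast (by nlinarith [Real.pi_pos] : (0:ℝ) < (m:ℝ))
        exact_mod_cast this
      nlinarith
  exact le_of_tendsto_of_tendsto' ((hf.tendsto z0).comp hseq) ((hg.tendsto z0).comp hseq)
    (fun k => h (seq k) (hmem k) (hne k))

lemma my_maxmod (u v : Polynomial ℂ)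
    (hvne : ∀ z : ℂ, ‖z‖ ≤ 1 → v.eval z ≠ 0)
    (hb : ∀ z : ℂ, ‖z‖ = 1 → ‖u.eval z‖ ≤ ‖v.eval z‖) :
    ∀ z : ℂ, ‖z‖ ≤ 1 → ‖u.eval z‖ ≤ ‖v.eval z‖ := by
  intro z hz
  have hclos : closure (ball (0:ℂ) 1) = closedBall (0:ℂ) 1 := closure_ball 0 one_ne_zero
  have habs : ∀ w : ℂ, w ∈ closedBall (0:ℂ) 1 ↔ ‖w‖ ≤ 1 := by
    intro w; rw [mem_closedBall, Complex.dist_eq, sub_zero]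
  have hd : DiffContOnCl ℂ (fun w => u.eval w / v.eval w) (ball (0:ℂ) 1) := by
    constructor
    · apply DifferentiableOn.div
      · exact u.differentiable.differentiableOn
      · exact v.differentiable.differentiableOn
      · intro w hw
        exact hvne w (le_of_lt (by rwa [mem_ball, Complex.dist_eq, sub_zero] at hw))
    · rw [hclos]
      apply ContinuousOn.div
      · exact u.continuous.continuousOn
      · exact v.continuous.continuousOn
      · intro w hw; exact hvne w ((habs w).mp hw)
  have key : ∀ w ∈ closure (ball (0:ℂ) 1), ‖u.eval w / v.eval w‖ ≤ 1 := by
    apply Complex.norm_le_of_forall_mem_frontier_norm_le isBounded_ball hd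
    intro w hw
    rw [frontier_ball (0:ℂ) one_ne_zero] at hw
    have hw1 : ‖w‖ = 1 := by rwa [mem_sphere_iff_norm, sub_zero] at hw
    have hv : v.eval w ≠ 0 := hvne w (le_of_eq hw1)
    rw [norm_div,
      div_le_one (norm_pos_iff.mpr hv)]
    exact hb w hw1
  have hzmem : z ∈ closure (ball (0:ℂ) 1) := by rw [hclos]; exact (habs z).mpr hz
  have h2 := key z hzmem
  have hv : v.eval z ≠ 0 := hvne z hz
  rw [norm_div,
    div_le_one (norm_pos_iff.mpr hv)] at h2
  exact h2
lemma my_lemB_aux : ∀ N : ℕ, ∀ u v : Polynomial ℂ, v ≠ 0 → v.natDegree ≤ N →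
    (∀ z : ℂ, v.eval z = 0 → 1 ≤ ‖z‖) →
    (∀ z : ℂ, ‖z‖ = 1 → ‖u.eval z‖ ≤ ‖v.eval z‖) →
    ∀ z : ℂ, ‖z‖ ≤ 1 → ‖u.eval z‖ ≤ ‖v.eval z‖ := by
  intro N
  induction N with
  | zero =>
    intro u v hv0 hdeg hvz hb
    apply my_maxmod u v _ hb
    intro z hz
    intro hev
    have h1 : (1:ℝ) ≤ ‖z‖ := hvz z hev
    have hz1 : ‖z‖ = 1 := le_antisymm hz h1
    -- v has a root z0 on the sphere, but v is a nonzero constant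
    have : v = Polynomial.C (v.coeff 0) := Polynomial.eq_C_of_natDegree_le_zero hdeg
    rw [this] at hev
    simp only [Polynomial.eval_C] at hev
    rw [this] at hv0
    exact hv0 (by rw [hev]; simp)
  | succ N ih =>
    intro u v hv0 hdeg hvz hb
    by_cases hsz : ∃ z0 : ℂ, ‖z0‖ = 1 ∧ v.eval z0 = 0
    · obtain ⟨z0, hz01, hz0v⟩ := hsz
      -- u also vanishes at z0
      have hu0 : u.eval z0 = 0 := by
        have h1 := hb z0 hz01
        rw [hz0v, norm_zero] at h1
        exact norm_eq_zero.mp (le_antisymm h1 (norm_nonneg _))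
      obtain ⟨v', hv'⟩ := (Polynomial.dvd_iff_isRoot.mpr hz0v)
      obtain ⟨u', hu'⟩ := (Polynomial.dvd_iff_isRoot.mpr hu0)
      have hv'0 : v' ≠ 0 := by
        intro h; rw [h, mul_zero] at hv'; exact hv0 hv'
      have hXz : (Polynomial.X - Polynomial.C z0) ≠ (0 : Polynomial ℂ) := Polynomial.X_sub_C_ne_zero z0
      have hdeg' : v'.natDegree ≤ N := by
        have : v.natDegree = 1 + v'.natDegree := by
          rw [hv', Polynomial.natDegree_mul hXz hv'0, Polynomial.natDegree_X_sub_C]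
        omega
      have hvz' : ∀ z : ℂ, v'.eval z = 0 → 1 ≤ ‖z‖ := by
        intro z hz
        apply hvz
        rw [hv', Polynomial.eval_mul, hz, mul_zero]
      -- boundary bound for u', v'
      have hb' : ∀ z : ℂ, ‖z‖ = 1 → ‖u'.eval z‖ ≤ ‖v'.eval z‖ := by
        have hoff : ∀ z : ℂ, ‖z‖ = 1 → z ≠ z0 →
            ‖u'.eval z‖ ≤ ‖v'.eval z‖ := by
          intro z hz hne
          have hfac : ‖z - z0‖ * ‖u'.eval z‖
              ≤ ‖z - z0‖ * ‖v'.eval z‖ := by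
            have := hb z hz
            rw [hu', hv', Polynomial.eval_mul, Polynomial.eval_mul, norm_mul, norm_mul] at this
            simpa using this
          have hpos : 0 < ‖z - z0‖ :=
            norm_pos_iff.mpr (sub_ne_zero.mpr hne)
          exact le_of_mul_le_mul_left hfac hpos
        intro z hz
        rcases eq_or_ne z z0 with rfl | hne
        · exact my_sphere_limit (continuous_norm.comp u'.continuous)
            (continuous_norm.comp v'.continuous) hz hoff
        · exact hoff z hz hne
      have hconc := ih u' v' hv'0 hdeg' hvz' hb'
      intro z hz
      rw [hu', hv', Polynomial.eval_mul, Polynomial.eval_mul, norm_mul, norm_mul]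
      exact mul_le_mul_of_nonneg_left (hconc z hz) (norm_nonneg _)
    · push_neg at hsz
      apply my_maxmod u v _ hb
      intro z hz hev
      rcases lt_or_eq_of_le hz with hlt | heq
      · exact absurd (hvz z hev) (by linarith)
      · exact hsz z heq hev
lemma my_re_div_pos {z r : ℂ} (hz : 1 < ‖z‖) (hr : ‖r‖ ≤ 1) :
    0 < (z / (z - r)).re := by
  have hzr : z - r ≠ 0 := by
    intro h
    rw [sub_eq_zero.mp h] at hz; linarith
  have hns : 0 < Complex.normSq (z - r) := Complex.normSq_pos.mpr hzr
  have hcs : z.re * r.re + z.im * r.im ≤ ‖z‖ * ‖r‖ := by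
    have h1 := Complex.re_le_norm (z * (starRingEnd ℂ) r)
    have h2 : (z * (starRingEnd ℂ) r).re = z.re * r.re + z.im * r.im := by
      simp [Complex.mul_re, Complex.conj_re, Complex.conj_im]
    have h3 : ‖z * (starRingEnd ℂ) r‖ = ‖z‖ * ‖r‖ := by
      rw [norm_mul, Complex.norm_conj]
    rw [h2, h3] at h1
    exact h1
  have hsq : ‖z‖ ^ 2 = z.re ^ 2 + z.im ^ 2 := by
    rw [Complex.sq_norm, Complex.normSq_apply]; ring
  have hnum : 0 < z.re * (z - r).re + z.im * (z - r).im := by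
    simp only [Complex.sub_re, Complex.sub_im]
    have habsz : 0 < ‖z‖ := by linarith
    nlinarith [hcs, hsq, mul_le_mul_of_nonneg_left hr (le_of_lt habsz)]
  rw [Complex.div_re]
  have : z.re * (z - r).re / Complex.normSq (z - r) + z.im * (z - r).im / Complex.normSq (z - r)
      = (z.re * (z - r).re + z.im * (z - r).im) / Complex.normSq (z - r) := by ring
  rw [this]
  positivity

lemma my_L0 (z : ℂ) (hz : 1 < ‖z‖) :
    ∀ s : Multiset ℂ, (∀ r ∈ s, ‖r‖ ≤ 1) →
      (Multiset.map (fun r => Polynomial.X - Polynomial.C r) s).prod.eval z ≠ 0 ∧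
      0 ≤ (z * (Polynomial.derivative (Multiset.map (fun r => Polynomial.X - Polynomial.C r) s).prod).eval z /
            (Multiset.map (fun r => Polynomial.X - Polynomial.C r) s).prod.eval z).re ∧
      (s ≠ 0 → 0 < (z * (Polynomial.derivative (Multiset.map (fun r => Polynomial.X - Polynomial.C r) s).prod).eval z /
            (Multiset.map (fun r => Polynomial.X - Polynomial.C r) s).prod.eval z).re) := by
  intro s
  induction s using Multiset.induction with
  | empty => simp
  | cons r t ih =>
    intro hmem
    have hr : ‖r‖ ≤ 1 := hmem r (Multiset.mem_cons_self r t)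
    have ht : ∀ x ∈ t, ‖x‖ ≤ 1 := fun x hx => hmem x (Multiset.mem_cons_of_mem hx)
    obtain ⟨hQt0, hQtre, _⟩ := ih ht
    set Qt := (Multiset.map (fun r => Polynomial.X - Polynomial.C r) t).prod with hQtdef
    have hprod : (Multiset.map (fun r => Polynomial.X - Polynomial.C r) (r ::ₘ t)).prod
        = (Polynomial.X - Polynomial.C r) * Qt := by
      rw [Multiset.map_cons, Multiset.prod_cons]
    have hzr : (z - r) ≠ 0 := by
      intro h
      rw [sub_eq_zero] at h
      rw [← h] at hr; linarith
    have hder : Polynomial.derivative ((Polynomial.X - Polynomial.C r) * Qt)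
        = Qt + (Polynomial.X - Polynomial.C r) * Polynomial.derivative Qt := by
      rw [Polynomial.derivative_mul]
      simp
    refine ⟨?_, ?_, ?_⟩
    · rw [hprod, Polynomial.eval_mul]
      simp only [Polynomial.eval_sub, Polynomial.eval_X, Polynomial.eval_C]
      exact mul_ne_zero hzr hQt0
    all_goals {
      rw [hprod, hder]
      have heval : z * (Qt + (Polynomial.X - Polynomial.C r) * Polynomial.derivative Qt).eval z /
          ((Polynomial.X - Polynomial.C r) * Qt).eval z
          = z / (z - r) + z * (Polynomial.derivative Qt).eval z / Qt.eval z := by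
        simp only [Polynomial.eval_add, Polynomial.eval_mul, Polynomial.eval_sub,
          Polynomial.eval_X, Polynomial.eval_C]
        field_simp
      rw [heval, Complex.add_re]
      have hpos := my_re_div_pos hz hr
      first
        | linarith
        | (intro _; linarith)
    }

lemma my_L1 (Q : Polynomial ℂ) (hQ : Q ≠ 0) (hd : 1 ≤ Q.natDegree)
    (hz : ∀ w : ℂ, Q.eval w = 0 → ‖w‖ ≤ 1)
    (z : ℂ) (h1 : 1 < ‖z‖) : (Polynomial.derivative Q).eval z ≠ 0 := by
  have hroots : Multiset.card Q.roots = Q.natDegree :=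
    Polynomial.splits_iff_card_roots.mp (IsAlgClosed.splits Q)
  have hfac := Polynomial.C_leadingCoeff_mul_prod_multiset_X_sub_C (p := Q) hroots
  have hmem : ∀ r ∈ Q.roots, ‖r‖ ≤ 1 := by
    intro r hr
    exact hz r ((Polynomial.mem_roots'.mp hr).2)
  obtain ⟨hR0, _, hpos⟩ := my_L0 z h1 Q.roots hmem
  have hsne : Q.roots ≠ 0 := by
    intro h
    rw [h] at hroots
    simp at hroots
    omega
  have hpos' := hpos hsne
  set R := (Multiset.map (fun r => Polynomial.X - Polynomial.C r) Q.roots).prod with hRdef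
  have hR' : (Polynomial.derivative R).eval z ≠ 0 := by
    intro h
    rw [h] at hpos'
    simp at hpos'
  have hQder : Polynomial.derivative Q = Polynomial.C Q.leadingCoeff * Polynomial.derivative R := by
    conv_lhs => rw [← hfac]
    rw [Polynomial.derivative_C_mul]
  rw [hQder, Polynomial.eval_mul, Polynomial.eval_C]
  exact mul_ne_zero (Polynomial.leadingCoeff_ne_zero.mpr hQ) hR'
theorem stmt_6 (n : ℕ) (P p : Polynomial ℂ) (hP : P.natDegree = n)
    (hzeros : ∀ z : ℂ, P.eval z = 0 → ‖z‖ ≤ 1)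
    (hp : p.natDegree ≤ n)
    (hle : ∀ z : ℂ, ‖z‖ = 1 → ‖p.eval z‖ ≤ ‖P.eval z‖) :
    ∀ z : ℂ, 1 ≤ ‖z‖ →
      ‖(derivative p).eval z‖ ≤ ‖(derivative P).eval z‖ := by
  have hP0 : P ≠ 0 := by
    intro h
    have := hzeros 2 (by rw [h]; simp)
    rw [Complex.norm_two] at this
    linarith
  rcases Nat.eq_zero_or_pos n with hn0 | hn1
  · -- degree 0 case : p is constant
    subst hn0
    have hpc : p = Polynomial.C (p.coeff 0) := Polynomial.eq_C_of_natDegree_le_zero hp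
    intro z _
    rw [hpc, Polynomial.derivative_C]
    simp only [Polynomial.eval_zero, norm_zero]
    exact norm_nonneg _
  -- main case : n ≥ 1
  have hPn : P.coeff n ≠ 0 := by
    rw [← hP, Polynomial.coeff_natDegree]
    exact Polynomial.leadingCoeff_ne_zero.mpr hP0
  set u := reflect n p with hudef
  set v := reflect n P with hvdef
  have hv0 : v ≠ 0 := by
    rw [hvdef, Ne, reflect_eq_zero_iff]
    exact hP0
  have hvdeg : v.natDegree ≤ n := by
    rw [Polynomial.natDegree_le_iff_coeff_eq_zero]
    intro k hk
    rw [hvdef, coeff_reflect]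
    apply Polynomial.coeff_eq_zero_of_natDegree_lt
    rw [hP]
    have : revAt n k = k := by
      have : ¬ (k ≤ n) := by omega
      show (if k ≤ n then n - k else k) = k
      exact if_neg this
    omega
  have hvz : ∀ ζ : ℂ, v.eval ζ = 0 → 1 ≤ ‖ζ‖ := by
    intro ζ hζ
    rcases eq_or_ne ζ 0 with rfl | hζ0
    · exfalso
      apply hPn
      have : v.coeff 0 = P.coeff n := by
        rw [hvdef, coeff_reflect, revAt_le (Nat.zero_le n)]
        simp
      rw [← this, Polynomial.coeff_zero_eq_eval_zero]
      exact hζ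
    · have hform := my_eval_reflect P n (le_of_eq hP) (inv_ne_zero hζ0)
      rw [inv_inv] at hform
      have hPev : P.eval ζ⁻¹ = 0 := by
        rw [← hform, ← hvdef, hζ, zero_mul]
      have := hzeros ζ⁻¹ hPev
      rw [norm_inv] at this
      have hpos : 0 < ‖ζ‖ := norm_pos_iff.mpr hζ0
      have h3 : ‖ζ‖ * (‖ζ‖)⁻¹ = 1 := mul_inv_cancel₀ (ne_of_gt hpos)
      by_contra hcon
      push_neg at hcon
      nlinarith
  have hb : ∀ ζ : ℂ, ‖ζ‖ = 1 →
      ‖u.eval ζ‖ ≤ ‖v.eval ζ‖ := by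
    intro ζ hζ
    have hζ0 : ζ ≠ 0 := by intro h; rw [h] at hζ; simp at hζ
    have hζinv0 : ζ⁻¹ ≠ 0 := inv_ne_zero hζ0
    have hup := my_eval_reflect p n hp hζinv0
    have hvP := my_eval_reflect P n (le_of_eq hP) hζinv0
    rw [inv_inv] at hup hvP
    have habs : ‖ζ⁻¹‖ = 1 := by rw [norm_inv, hζ]; norm_num
    have h1 : ‖u.eval ζ‖ * ‖ζ⁻¹‖ ^ n = ‖p.eval ζ⁻¹‖ := by
      rw [← norm_pow, ← norm_mul, hup]
    have h2 : ‖v.eval ζ‖ * ‖ζ⁻¹‖ ^ n = ‖P.eval ζ⁻¹‖ := by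
      rw [← norm_pow, ← norm_mul, hvP]
    rw [habs, one_pow, mul_one] at h1 h2
    rw [h1, h2]
    exact hle ζ⁻¹ habs
  have hA0 : ∀ ζ : ℂ, ‖ζ‖ ≤ 1 → ‖u.eval ζ‖ ≤ ‖v.eval ζ‖ :=
    my_lemB_aux n u v hv0 hvdeg hvz hb
  -- Claim A : |p| ≤ |P| outside the unit disk
  have claimA : ∀ w : ℂ, 1 ≤ ‖w‖ → ‖p.eval w‖ ≤ ‖P.eval w‖ := by
    intro w hw
    rcases eq_or_lt_of_le hw with heq | hlt
    · exact hle w heq.symm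
    · have hw0 : w ≠ 0 := by intro h; rw [h] at hlt; simp at hlt; linarith
      have hup := my_eval_reflect p n hp hw0
      have hvP := my_eval_reflect P n (le_of_eq hP) hw0
      have habsinv : ‖w⁻¹‖ ≤ 1 := by
        rw [norm_inv]
        exact inv_le_one_of_one_le₀ (le_of_lt hlt)
      have hA := hA0 w⁻¹ habsinv
      have h1 : ‖p.eval w‖ = ‖u.eval w⁻¹‖ * ‖w‖ ^ n := by
        rw [← norm_pow, ← norm_mul, hup]
      have h2 : ‖P.eval w‖ = ‖v.eval w⁻¹‖ * ‖w‖ ^ n := by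
        rw [← norm_pow, ← norm_mul, hvP]
      rw [h1, h2]
      apply mul_le_mul_of_nonneg_right hA
      positivity
  -- coefficient bound
  have hcoeff : ‖p.coeff n‖ ≤ ‖P.coeff n‖ := by
    have := hA0 0 (by simp)
    rw [← Polynomial.coeff_zero_eq_eval_zero, ← Polynomial.coeff_zero_eq_eval_zero] at this
    have hu0 : u.coeff 0 = p.coeff n := by
      rw [hudef, coeff_reflect, revAt_le (Nat.zero_le n)]; simp
    have hv0' : v.coeff 0 = P.coeff n := by
      rw [hvdef, coeff_reflect, revAt_le (Nat.zero_le n)]; simp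
    rwa [hu0, hv0'] at this
  -- the strict exterior case
  have strict : ∀ z : ℂ, 1 < ‖z‖ →
      ‖(derivative p).eval z‖ ≤ ‖(derivative P).eval z‖ := by
    intro z h1
    by_contra hcon
    push_neg at hcon
    have hP' : (derivative P).eval z ≠ 0 := my_L1 P hP0 (by omega) hzeros z h1
    have hP'pos : 0 < ‖(derivative P).eval z‖ := norm_pos_iff.mpr hP'
    set lam : ℂ := (derivative p).eval z / (derivative P).eval z with hlamdef
    have hlam : 1 < ‖lam‖ := by
      rw [hlamdef, norm_div]
      rw [lt_div_iff₀ hP'pos, one_mul]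
      exact hcon
    set q : Polynomial ℂ := p - Polynomial.C lam * P with hqdef
    have hqc : q.coeff n ≠ 0 := by
      rw [hqdef, Polynomial.coeff_sub, Polynomial.coeff_C_mul]
      intro h
      have heq : p.coeff n = lam * P.coeff n := by linear_combination h
      have : ‖p.coeff n‖ = ‖lam‖ * ‖P.coeff n‖ := by
        rw [heq, norm_mul]
      have hPnpos : 0 < ‖P.coeff n‖ := norm_pos_iff.mpr hPn
      nlinarith
    have hq0 : q ≠ 0 := fun h => hqc (by rw [h]; simp)
    have hqdeg : q.natDegree = n := by
      have hub : q.natDegree ≤ n := by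
        apply le_trans (Polynomial.natDegree_sub_le _ _)
        apply max_le hp
        apply le_trans (Polynomial.natDegree_C_mul_le _ _)
        exact le_of_eq hP
      have hlb : n ≤ q.natDegree := Polynomial.le_natDegree_of_ne_zero hqc
      omega
    have hqz : ∀ w : ℂ, q.eval w = 0 → ‖w‖ ≤ 1 := by
      intro w hw
      by_contra hw1
      push_neg at hw1
      have hPw : P.eval w ≠ 0 := by
        intro h
        exact absurd (hzeros w h) (by linarith)
      rw [hqdef, Polynomial.eval_sub, Polynomial.eval_mul, Polynomial.eval_C, sub_eq_zero] at hw
      have habs : ‖p.eval w‖ = ‖lam‖ * ‖P.eval w‖ := by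
        rw [hw, norm_mul]
      have hA := claimA w (le_of_lt hw1)
      have hPwpos : 0 < ‖P.eval w‖ := norm_pos_iff.mpr hPw
      nlinarith
    have hq' := my_L1 q hq0 (by omega) hqz z h1
    apply hq'
    rw [hqdef, Polynomial.derivative_sub, Polynomial.derivative_C_mul,
      Polynomial.eval_sub, Polynomial.eval_mul, Polynomial.eval_C, hlamdef]
    field_simp
    simp
  -- conclude, including the boundary by continuity
  intro z hz
  rcases eq_or_lt_of_le hz with heq | hlt
  · -- |z| = 1 : approach radially
    set seq : ℕ → ℂ := fun k => ((1 + ((k:ℝ)+1)⁻¹ : ℝ) : ℂ) * z with hseqdef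
    have hT : Filter.Tendsto (fun k : ℕ => ((1 + ((k:ℝ)+1)⁻¹ : ℝ))) Filter.atTop (nhds 1) := by
      have : Filter.Tendsto (fun k : ℕ => (((k:ℝ)+1)⁻¹)) Filter.atTop (nhds 0) := by
        simpa [one_div] using tendsto_one_div_add_atTop_nhds_zero_nat (𝕜 := ℝ)
      have := Filter.Tendsto.const_add (1:ℝ) this
      simpa using this
    have hseq : Filter.Tendsto seq Filter.atTop (nhds z) := by
      have hcont : Continuous fun t : ℝ => ((t:ℂ) * z) := by continuity
      have := (hcont.tendsto 1).comp hT
      simpa [Function.comp_def, hseqdef] using this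
    have hsabs : ∀ k : ℕ, 1 < ‖seq k‖ := by
      intro k
      rw [hseqdef]
      simp only [norm_mul, ← heq]
      rw [Complex.norm_real, Real.norm_eq_abs]
      have h1 : (0:ℝ) < ((k:ℝ)+1)⁻¹ := by positivity
      have h2 : |1 + ((k:ℝ)+1)⁻¹| = 1 + ((k:ℝ)+1)⁻¹ := abs_of_pos (by linarith)
      rw [h2, mul_one]
      linarith
    have hcp : Continuous fun w => ‖(derivative p).eval w‖ :=
      continuous_norm.comp (derivative p).continuous
    have hcP : Continuous fun w => ‖(derivative P).eval w‖ :=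
      continuous_norm.comp (derivative P).continuous
    exact le_of_tendsto_of_tendsto' ((hcp.tendsto z).comp hseq) ((hcP.tendsto z).comp hseq)
      (fun k => strict (seq k) (hsabs k))
  · exact strict z hlt
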